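/- Let k be a field and let V be the 3-dimensional k-vector space with basis {x, p, g}. Define linear maps Δ, Δ̃ : V → V ⊗ V by Δx = x⊗x, Δp = p⊗x, Δg = g⊗x, and Δ̃x = x⊗p + g⊗x, Δ̃p = p⊗p, Δ̃g = g⊗g. Then Δ and Δ̃ are coassociative and satisfy the entanglement equation (Δ̃ ⊗ id) ∘ Δ = (id ⊗ Δ) ∘ Δ̃. Moreover (Δ ⊗ id) ∘ Δ̃ ≠ (id ⊗ Δ̃) ∘ Δ, so this L-coalgebra is chiral. -/

import Mathlib

open TensorProduct

noncomputable section

variable {k V : Type*} [Field k] [AddCommGroup V] [Module k V]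

/-- `(Δ' ⊗ id) ∘ Δ` composed with the standard associator, as a map `V → V ⊗ (V ⊗ V)`. -/
def lcomp (Δ' Δ : V →ₗ[k] V ⊗[k] V) : V →ₗ[k] V ⊗[k] (V ⊗[k] V) :=
  (TensorProduct.assoc k V V V).toLinearMap ∘ₗ TensorProduct.map Δ' LinearMap.id ∘ₗ Δ

/-- `(id ⊗ Δ') ∘ Δ` as a map `V → V ⊗ (V ⊗ V)`. -/
def rcomp (Δ' Δ : V →ₗ[k] V ⊗[k] V) : V →ₗ[k] V ⊗[k] (V ⊗[k] V) :=
  TensorProduct.map LinearMap.id Δ' ∘ₗ Δ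

/-- Coassociativity of a coproduct: `(Δ ⊗ id) ∘ Δ = (id ⊗ Δ) ∘ Δ`. -/
def Coassoc (Δ : V →ₗ[k] V ⊗[k] V) : Prop := lcomp Δ Δ = rcomp Δ Δ

/-- `(D, Δ, Δ̃)` is a coassociative co-dialgebra: both coproducts are coassociative,
`(id ⊗ Δ) ∘ Δ = (id ⊗ Δ̃) ∘ Δ`, `(Δ̃ ⊗ id) ∘ Δ̃ = (Δ ⊗ id) ∘ Δ̃`, and the entanglement
equation `(Δ̃ ⊗ id) ∘ Δ = (id ⊗ Δ) ∘ Δ̃` holds. -/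
def CoDialgebra (Δ Δ' : V →ₗ[k] V ⊗[k] V) : Prop :=
  Coassoc Δ ∧ Coassoc Δ' ∧
  rcomp Δ Δ = rcomp Δ' Δ ∧
  lcomp Δ' Δ' = lcomp Δ Δ' ∧
  lcomp Δ' Δ = rcomp Δ Δ'

/-- On the 3-dimensional space with basis `{x, p, g}`, the coproducts
`Δx = x⊗x`, `Δp = p⊗x`, `Δg = g⊗x` and `Δ̃x = x⊗p + g⊗x`, `Δ̃p = p⊗p`, `Δ̃g = g⊗g` are
coassociative and satisfy the entanglement equation `(Δ̃ ⊗ id)Δ = (id ⊗ Δ)Δ̃`, but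
`(Δ ⊗ id)Δ̃ ≠ (id ⊗ Δ̃)Δ`: the `L`-coalgebra is chiral. -/
theorem stmt10 (k W : Type*) [Field k] [AddCommGroup W] [Module k W]
    (bs : Module.Basis (Fin 3) k W)
    (x p g : W) (hx : x = bs 0) (hp : p = bs 1) (hg : g = bs 2)
    (Δ Δ' : W →ₗ[k] W ⊗[k] W)
    (hΔx : Δ x = x ⊗ₜ[k] x) (hΔp : Δ p = p ⊗ₜ[k] x) (hΔg : Δ g = g ⊗ₜ[k] x)
    (hΔ'x : Δ' x = x ⊗ₜ[k] p + g ⊗ₜ[k] x) (hΔ'p : Δ' p = p ⊗ₜ[k] p)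
    (hΔ'g : Δ' g = g ⊗ₜ[k] g) :
    Coassoc Δ ∧ Coassoc Δ' ∧
    lcomp Δ' Δ = rcomp Δ Δ' ∧
    lcomp Δ Δ' ≠ rcomp Δ' Δ := by
  subst hx hp hg
  have happ : ∀ (A B : W →ₗ[k] W ⊗[k] W) (w : W),
      lcomp A B w = (TensorProduct.assoc k W W W) (TensorProduct.map A LinearMap.id (B w)) ∧
      rcomp A B w = TensorProduct.map LinearMap.id A (B w) := by
    intro A B w; constructor <;> rfl
  refine ⟨?_, ?_, ?_, ?_⟩
  · apply Module.Basis.ext bs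
    intro i
    fin_cases i <;>
      simp [lcomp, rcomp, hΔx, hΔp, hΔg, TensorProduct.map_tmul]
  · apply Module.Basis.ext bs
    intro i
    fin_cases i <;>
      simp [lcomp, rcomp, hΔ'x, hΔ'p, hΔ'g, TensorProduct.map_tmul,
        TensorProduct.tmul_add, TensorProduct.add_tmul] <;> abel
  · apply Module.Basis.ext bs
    intro i
    fin_cases i <;>
      simp [lcomp, rcomp, hΔx, hΔp, hΔg, hΔ'x, hΔ'p, hΔ'g, TensorProduct.map_tmul,
        TensorProduct.tmul_add, TensorProduct.add_tmul] <;> abel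
  · intro h
    have h0 := LinearMap.congr_fun h (bs 0)
    have hl : lcomp Δ Δ' (bs 0) =
        bs 0 ⊗ₜ[k] (bs 0 ⊗ₜ[k] bs 1) + bs 2 ⊗ₜ[k] (bs 0 ⊗ₜ[k] bs 0) := by
      simp [lcomp, hΔ'x, hΔx, hΔg, TensorProduct.map_tmul, TensorProduct.add_tmul]
    have hr : rcomp Δ' Δ (bs 0) =
        bs 0 ⊗ₜ[k] (bs 0 ⊗ₜ[k] bs 1) + bs 0 ⊗ₜ[k] (bs 2 ⊗ₜ[k] bs 0) := by
      simp [rcomp, hΔx, hΔ'x, TensorProduct.map_tmul, TensorProduct.tmul_add]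
    rw [hl, hr] at h0
    have h1 : (bs 2 : W) ⊗ₜ[k] (bs 0 ⊗ₜ[k] bs 0) = bs 0 ⊗ₜ[k] (bs 2 ⊗ₜ[k] bs 0) :=
      by exact add_left_cancel h0
    have B := bs.tensorProduct (bs.tensorProduct bs)
    have hB2 : (bs.tensorProduct (bs.tensorProduct bs)) (2, (0, 0)) =
        bs 2 ⊗ₜ[k] (bs 0 ⊗ₜ[k] bs 0) := by
      simp [Module.Basis.tensorProduct_apply, -Prod.mk_zero_zero]
    have hB0 : (bs.tensorProduct (bs.tensorProduct bs)) (0, (2, 0)) =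
        bs 0 ⊗ₜ[k] (bs 2 ⊗ₜ[k] bs 0) := by
      simp [Module.Basis.tensorProduct_apply, -Prod.mk_zero_zero]
    have := (bs.tensorProduct (bs.tensorProduct bs)).injective
      (hB2.trans (h1.trans hB0.symm))
    simp at this
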